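/- arXiv:2103.11926 — 2 statements merged into one kernel-verified Lean document; each statement's English description precedes it below -/
import Mathlib

section
/- There exists an execution (over at least 2 processes and at least 2 operation types) that is k-nonblocking but not DNB_k; hence DNB_k is strictly stronger than k-nonblocking. -/
/-- DNB_k is strictly stronger than k-nonblocking: for every `k ≥ 1` there is an
execution over `k+1` processes and `2` operation types (given by predicates
`stuckOn` and `completesInf`) that is k-nonblocking but not differentiated
k-nonblocking. -/
theorem knb_not_implies_dnb (k : ℕ) (hk : 1 ≤ k) :
    ∃ (stuckOn completesInf : Fin (k + 1) → Fin 2 → Prop),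
      -- k-nonblocking:
      ((∃ p t, stuckOn p t) →
        ∃ S : Finset (Fin (k + 1)), k ≤ S.card ∧ ∀ p ∈ S, ∃ t, completesInf p t) ∧
      -- not DNB_k:
      ¬ (∀ t, (∃ p, stuckOn p t) →
          ∃ S : Finset (Fin (k + 1)), k ≤ S.card ∧ ∀ p ∈ S, completesInf p t) := by
  refine ⟨fun p t => p = 0 ∧ t = 0, fun p t => p ≠ 0 ∧ t = 1, ?_, ?_⟩
  · intro _
    refine ⟨Finset.univ.erase 0, ?_, ?_⟩
    · simp [Finset.card_erase_of_mem]
    · intro p hp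
      exact ⟨1, Finset.ne_of_mem_erase hp, rfl⟩
  · intro h
    obtain ⟨S, hcard, hS⟩ := h 0 ⟨0, rfl, rfl⟩
    have : S.Nonempty := Finset.card_pos.mp (lt_of_lt_of_le hk hcard)
    obtain ⟨p, hp⟩ := this
    exact absurd (hS p hp).2 (by decide)
end

section
/- If the head pointer only ever moves from a node A to the node B satisfying next A = some B, and the tail pointer likewise only moves along next-links, and initially head = tail = gInitNode, and whenever the head is moved we have head ≠ tail at the preceding moment, then at all times the tail is reachable from the head via the next relation (the tail never lags behind the head). -/
/-- The tail never lags behind the head: if the head and tail pointers only move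
along next-links of a link-persistent linked list, both start at `gInitNode`, and
the head moves only when `head ≠ tail`, then at every time the tail is reachable
from the head. -/
theorem tail_reachable_from_head {Node : Type*}
    (next : ℕ → Node → Option Node) (head tail : ℕ → Node) (gInitNode : Node)
    (hpersist : ∀ t a b, next t a = some b → next (t + 1) a = some b)
    (hinit : head 0 = gInitNode ∧ tail 0 = gInitNode)
    (hhead : ∀ t, head (t + 1) = head t ∨
      (next t (head t) = some (head (t + 1)) ∧ head t ≠ tail t))
    (htail : ∀ t, tail (t + 1) = tail t ∨ next t (tail t) = some (tail (t + 1))) :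
    ∀ t, Relation.ReflTransGen (fun a b => next t a = some b) (head t) (tail t) := by
  intro t
  induction t with
  | zero => rw [hinit.1, hinit.2]
  | succ t ih =>
    -- lift reachability at time t to time t+1
    have lift : ∀ a b : Node,
        Relation.ReflTransGen (fun a b => next t a = some b) a b →
        Relation.ReflTransGen (fun a b => next (t + 1) a = some b) a b := by
      intro a b h
      exact Relation.ReflTransGen.mono (fun x y hxy => hpersist t x y hxy) _ _ h
    -- head(t+1) reaches tail t at time t+1
    have hstep : Relation.ReflTransGen (fun a b => next (t + 1) a = some b)
        (head (t + 1)) (tail t) := by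
      rcases hhead t with h | ⟨hlink, hne⟩
      · rw [h]; exact lift _ _ ih
      · rcases (Relation.ReflTransGen.cases_head ih) with h | ⟨c, hc, hrest⟩
        · exact absurd h hne
        · have : c = head (t + 1) := by
            have := hc.symm.trans hlink
            exact Option.some_injective _ this
          subst this
          exact lift _ _ hrest
    rcases htail t with h | h
    · rw [h]; exact hstep
    · exact hstep.tail (hpersist t _ _ h)
end
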